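/- Let F = f + p with f convex differentiable and p convex, H ≻ 0, and let x^{k+1} be a minimizer of M_H(x, xᵏ) = f(xᵏ) + ⟨∇f(xᵏ), x−xᵏ⟩ + (1/2)‖x−xᵏ‖²_H + p(x). If F(x^{k+1}) ≤ M_H(x^{k+1}, xᵏ), then for all x ∈ ℝⁿ, F(x) − F(x^{k+1}) ≥ (1/2)‖x^{k+1}−xᵏ‖²_H + ⟨H(xᵏ−x^{k+1}), x−xᵏ⟩. -/

import Mathlib

open scoped RealInnerProductSpace
open Set Filter Topology

lemma grad_convex_ineq {n : ℕ} {f : EuclideanSpace ℝ (Fin n) → ℝ}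
    (hf : ConvexOn ℝ Set.univ f) {g x y : EuclideanSpace ℝ (Fin n)}
    (h : HasGradientAt f g x) : f x + ⟪g, y - x⟫ ≤ f y := by
  rcases eq_or_ne y x with rfl | hne
  · simp
  · have hline : ∀ t : ℝ, (AffineMap.lineMap x y) t = x + t • (y - x) := fun t => by
      simp [AffineMap.lineMap_apply]; module
    have hc : ConvexOn ℝ Set.univ (f ∘ (AffineMap.lineMap x y : ℝ →ᵃ[ℝ] _)) := by
      have := hf.comp_affineMap (AffineMap.lineMap x y)
      simpa using this
    have hg : HasDerivAt (f ∘ (AffineMap.lineMap x y : ℝ →ᵃ[ℝ] _)) ⟪g, y - x⟫ 0 := by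
      have hl : HasDerivAt (fun t : ℝ => x + t • (y - x)) (y - x) 0 := by
        simpa using ((hasDerivAt_id (0:ℝ)).smul_const (y - x)).const_add x
      have hf0 : HasFDerivAt f ((InnerProductSpace.toDual ℝ _) g) (x + (0:ℝ) • (y - x)) := by
        simpa using h.hasFDerivAt
      have := hf0.comp_hasDerivAt 0 hl
      have h2 : HasDerivAt (fun t : ℝ => f (x + t • (y - x)))
          ((InnerProductSpace.toDual ℝ _ g) (y - x)) 0 := by exact this
      have h3 : (InnerProductSpace.toDual ℝ _ g) (y - x) = ⟪g, y - x⟫ := rfl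
      rw [h3] at h2
      exact h2.congr_deriv rfl |>.congr_of_eventuallyEq (by
        filter_upwards with t
        simp [Function.comp, hline])
    have := hc.le_slope_of_hasDerivAt (mem_univ 0) (mem_univ 1) zero_lt_one hg
    rw [slope_def_field] at this
    simp only [Function.comp, hline] at this
    simp only [zero_smul, add_zero, one_smul] at this
    have hxy : x + (y - x) = y := by module
    rw [hxy] at this
    simp only [sub_zero, div_one] at this
    linarith

/-- Key lemma: if `x^{k+1}` minimizes `M_H(·, xᵏ)` and `F(x^{k+1}) ≤ M_H(x^{k+1}, xᵏ)`,
then for all `x`, `F(x) − F(x^{k+1}) ≥ (1/2)‖x^{k+1}−xᵏ‖²_H + ⟨H(xᵏ−x^{k+1}), x−xᵏ⟩`. -/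
theorem imro_lower_bound {n : ℕ}
    (f p : EuclideanSpace ℝ (Fin n) → ℝ) (f' : EuclideanSpace ℝ (Fin n) → EuclideanSpace ℝ (Fin n))
    (hf : ConvexOn ℝ Set.univ f) (hf' : ∀ x, HasGradientAt f (f' x) x)
    (hp : ConvexOn ℝ Set.univ p)
    (H : EuclideanSpace ℝ (Fin n) →L[ℝ] EuclideanSpace ℝ (Fin n))
    (hHsym : ∀ z w, ⟪H z, w⟫ = ⟪z, H w⟫)
    (hHpos : ∀ z, z ≠ 0 → 0 < ⟪z, H z⟫)
    (xk xk1 : EuclideanSpace ℝ (Fin n)) :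
    let F : EuclideanSpace ℝ (Fin n) → ℝ := fun x => f x + p x
    let M : EuclideanSpace ℝ (Fin n) → ℝ := fun x =>
      f xk + ⟪f' xk, x - xk⟫ + (1/2) * ⟪x - xk, H (x - xk)⟫ + p x
    (∀ x, M xk1 ≤ M x) → F xk1 ≤ M xk1 →
    ∀ x, F x - F xk1 ≥ (1/2) * ⟪xk1 - xk, H (xk1 - xk)⟫ + ⟪H (xk - xk1), x - xk⟫ := by
  intro F M hmin hle x
  set u : EuclideanSpace ℝ (Fin n) := xk1 - xk with hu
  set d : EuclideanSpace ℝ (Fin n) := x - xk1 with hd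
  -- gradient inequality
  have h1 : f xk + ⟪f' xk, x - xk⟫ ≤ f x := grad_convex_ineq hf (hf' xk)
  -- from F xk1 ≤ M xk1
  have h2 : f xk1 + p xk1 ≤ f xk + ⟪f' xk, u⟫ + (1/2) * ⟪u, H u⟫ + p xk1 := hle
  -- symmetry helper
  have hsym : ∀ z w : EuclideanSpace ℝ (Fin n), ⟪z, H w⟫ = ⟪w, H z⟫ := fun z w =>
    (hHsym z w).symm.trans (real_inner_comm w (H z))
  -- key optimality inequality
  have key : ∀ t ∈ Set.Ioc (0:ℝ) 1,
      0 ≤ (⟪f' xk, d⟫ + ⟪u, H d⟫ + (p x - p xk1)) + (t/2) * ⟪d, H d⟫ := by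
    intro t ht
    have hm := hmin (xk1 + t • d)
    have he : xk1 + t • d - xk = u + t • d := by rw [hu]; abel
    have hM : M (xk1 + t • d) = f xk + ⟪f' xk, u + t • d⟫
        + (1/2) * ⟪u + t • d, H (u + t • d)⟫ + p (xk1 + t • d) := by
      simp only [M, he]
    have hM1 : M xk1 = f xk + ⟪f' xk, u⟫ + (1/2) * ⟪u, H u⟫ + p xk1 := rfl
    rw [hM, hM1] at hm
    have hpc : p (xk1 + t • d) ≤ (1 - t) * p xk1 + t * p x := by
      have hcomb : (1 - t) • xk1 + t • x = xk1 + t • d := by rw [hd]; module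
      have := hp.2 (mem_univ xk1) (mem_univ x) (by linarith [ht.2] : (0:ℝ) ≤ 1 - t)
        (le_of_lt ht.1) (by ring)
      rw [hcomb] at this
      simpa using this
    have hexp : ⟪u + t • d, H (u + t • d)⟫
        = ⟪u, H u⟫ + 2 * t * ⟪u, H d⟫ + t^2 * ⟪d, H d⟫ := by
      simp only [map_add, map_smul, inner_add_left, inner_add_right,
        real_inner_smul_left, real_inner_smul_right]
      rw [hsym d u]
      ring
    have hlin : ⟪f' xk, u + t • d⟫ = ⟪f' xk, u⟫ + t * ⟪f' xk, d⟫ := by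
      rw [inner_add_right, real_inner_smul_right]
    rw [hexp, hlin] at hm
    have ht3 : 0 ≤ t * ((⟪f' xk, d⟫ + ⟪u, H d⟫ + (p x - p xk1)) + (t/2) * ⟪d, H d⟫) := by
      nlinarith [hm, hpc]
    by_contra hcon
    push_neg at hcon
    nlinarith [mul_pos ht.1 (neg_pos.mpr hcon)]
  -- pass to the limit t → 0⁺
  have hA : 0 ≤ ⟪f' xk, d⟫ + ⟪u, H d⟫ + (p x - p xk1) := by
    have hcont : Tendsto (fun t : ℝ => (⟪f' xk, d⟫ + ⟪u, H d⟫ + (p x - p xk1))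
        + (t/2) * ⟪d, H d⟫) (𝓝[>] 0)
        (𝓝 ((⟪f' xk, d⟫ + ⟪u, H d⟫ + (p x - p xk1)) + ((0:ℝ)/2) * ⟪d, H d⟫)) := by
      apply Tendsto.mono_left _ nhdsWithin_le_nhds
      exact (continuous_const.add (((continuous_id.div_const 2)).mul continuous_const)).tendsto 0
    have hev : ∀ᶠ t in 𝓝[>] (0:ℝ), 0 ≤ (⟪f' xk, d⟫ + ⟪u, H d⟫ + (p x - p xk1))
        + (t/2) * ⟪d, H d⟫ := by
      filter_upwards [Ioc_mem_nhdsGT_of_mem ⟨le_refl (0:ℝ), zero_lt_one⟩] with t ht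
      exact key t ht
    have := ge_of_tendsto hcont hev
    simpa using this
  -- assemble
  have hxk : x - xk = d + u := by rw [hd, hu]; abel
  have e1 : ⟪H (xk - xk1), x - xk⟫ = -⟪u, H d⟫ - ⟪u, H u⟫ := by
    have : xk - xk1 = -u := by rw [hu]; abel
    rw [this, hxk]
    simp only [map_neg, inner_neg_left, inner_add_right]
    rw [hHsym u d, hHsym u u]
    ring
  have e2 : ⟪f' xk, x - xk⟫ = ⟪f' xk, d⟫ + ⟪f' xk, u⟫ := by
    rw [hxk, inner_add_right]
  rw [e2] at h1
  show f x + p x - (f xk1 + p xk1) ≥ _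
  rw [e1]
  linarith
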